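/- For every integer n ≥ 6, β_b(C(n;1,2)) = (n−3)/2 if n ≡ 9 (mod 12), and β_b(C(n;1,2)) = 2(⌈(n−1)/4⌉ − 1) otherwise; moreover β_b(C(4;1,2)) = β_b(C(5;1,2)) = 1. -/

import Mathlib

/-- The eccentricity of a vertex: maximum distance to any other vertex. -/
noncomputable def eccent {V : Type*} [Fintype V] (G : SimpleGraph V) (v : V) : ℕ :=
  Finset.univ.sup (fun u => G.dist v u)

/-- The diameter of a finite graph: maximum eccentricity. -/
noncomputable def graphDiam {V : Type*} [Fintype V] (G : SimpleGraph V) : ℕ :=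
  Finset.univ.sup (fun v => eccent G v)

/-- `f` is an independent broadcast on `G`. -/
def IsIndepBroadcast {V : Type*} [Fintype V] (G : SimpleGraph V) (f : V → ℕ) : Prop :=
  (∀ v, f v ≤ eccent G v) ∧
  ∀ u v : V, u ≠ v → 0 < f u → 0 < f v → max (f u) (f v) < G.dist u v

/-- The broadcast independence number: maximum cost of an independent broadcast. -/
noncomputable def betaB {V : Type*} [Fintype V] (G : SimpleGraph V) : ℕ :=
  sSup {k | ∃ f : V → ℕ, IsIndepBroadcast G f ∧ ∑ v, f v = k}

/-- The independence number: maximum size of an independent set. -/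
noncomputable def alphaNum {V : Type*} [Fintype V] (G : SimpleGraph V) : ℕ :=
  sSup {k | ∃ s : Finset V, (∀ u ∈ s, ∀ v ∈ s, ¬ G.Adj u v) ∧ s.card = k}

/-- The circulant graph `C(n;1,a)` on vertices `v_0,…,v_{n-1}` with edges
`v_i v_{i+1}` and `v_i v_{i+a}`, indices mod `n`. -/
def circulantGraph (n a : ℕ) : SimpleGraph (Fin n) :=
  SimpleGraph.fromRel (fun i j => (i.val + 1) % n = j.val ∨ (i.val + a) % n = j.val)


open SimpleGraph Finset
open Fin.NatCast

set_option linter.unusedSectionVars false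
set_option linter.unreachableTactic false
set_option linter.unusedTactic false



/-- circular "weight" of a residue -/
def Fw (n x : ℕ) : ℕ := min (x % n) (n - x % n)

lemma Fw_congr {n x y : ℕ} (h : x % n = y % n) : Fw n x = Fw n y := by
  unfold Fw; rw [h]

lemma Fw_eq_of_lt {n x : ℕ} (h : x < n) : Fw n x = min x (n - x) := by
  unfold Fw; rw [Nat.mod_eq_of_lt h]

lemma Fw_add_le (n x y : ℕ) (hn : 0 < n) : Fw n (x + y) ≤ Fw n x + Fw n y := by
  unfold Fw
  have hx : x % n < n := Nat.mod_lt _ hn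
  have hy : y % n < n := Nat.mod_lt _ hn
  have hxy : (x + y) % n = (x % n + y % n) % n := by rw [Nat.add_mod]
  have h2 : (x % n + y % n) % n = x % n + y % n ∨
      (x % n + y % n) % n = x % n + y % n - n := by
    rcases Nat.lt_or_ge (x % n + y % n) n with h | h
    · left; exact Nat.mod_eq_of_lt h
    · right
      rw [Nat.mod_eq_sub_mod h, Nat.mod_eq_of_lt (by omega)]
  rw [hxy]
  omega

lemma Fw_anti {n a b : ℕ} (hn : 0 < n) (h : (a + b) % n = 0) : Fw n a = Fw n b := by
  unfold Fw
  have hx : a % n < n := Nat.mod_lt _ hn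
  have hy : b % n < n := Nat.mod_lt _ hn
  have hxy : (a % n + b % n) % n = 0 := by rw [← Nat.add_mod]; exact h
  have h2 : a % n + b % n = 0 ∨ a % n + b % n = n := by
    rcases Nat.lt_or_ge (a % n + b % n) n with h3 | h3
    · left; rwa [Nat.mod_eq_of_lt h3] at hxy
    · right
      rw [Nat.mod_eq_sub_mod h3, Nat.mod_eq_of_lt (by omega)] at hxy
      omega
  omega

section CD
variable {n : ℕ} [NeZero n]

lemma npos : 0 < n := Nat.pos_of_ne_zero (NeZero.ne n)

/-- circular distance on `Fin n` -/
def cd (i j : Fin n) : ℕ := Fw n ((j - i).val)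

lemma cd_eq_min (i j : Fin n) : cd i j = min (j - i).val (n - (j - i).val) :=
  Fw_eq_of_lt (j - i).isLt

lemma val_add_val_mod {a b : Fin n} : (a.val + b.val) % n = (a + b).val := by
  rw [Fin.val_add]

lemma cd_comm (i j : Fin n) : cd i j = cd j i := by
  unfold cd
  apply Fw_anti (npos)
  have h0 : (j - i) + (i - j) = 0 := by abel
  rw [val_add_val_mod, h0, Fin.val_zero]

lemma cd_triangle (i j k : Fin n) : cd i k ≤ cd i j + cd j k := by
  unfold cd
  have h0 : (k - i) = (j - i) + (k - j) := by abel
  have h1 : Fw n ((k - i).val) = Fw n ((j - i).val + (k - j).val) := by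
    apply Fw_congr
    rw [Nat.mod_eq_of_lt (k - i).isLt, val_add_val_mod, h0]
  rw [h1]
  exact Fw_add_le n _ _ npos

lemma cd_self (i : Fin n) : cd i i = 0 := by
  unfold cd
  simp [Fw]

lemma cd_eq_zero_iff {i j : Fin n} : cd i j = 0 ↔ i = j := by
  constructor
  · intro h
    rw [cd_eq_min] at h
    have := (j - i).isLt
    have h2 : (j - i).val = 0 := by omega
    have h3 : j - i = 0 := Fin.ext (h2.trans (Fin.val_zero n).symm)
    exact (sub_eq_zero.mp h3).symm
  · rintro rfl; exact cd_self i

lemma cd_add_nat (i : Fin n) (c : ℕ) : cd i (i + (c : Fin n)) = Fw n c := by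
  unfold cd
  rw [add_sub_cancel_left]
  apply Fw_congr
  rw [Fin.val_natCast, Nat.mod_mod_of_dvd]
  exact dvd_rfl

end CD

section Graph
variable {n : ℕ} [NeZero n]

lemma adj_step (h3 : 3 ≤ n) (i : Fin n) (k : ℕ) (hk : k = 1 ∨ k = 2) :
    (circulantGraph n 2).Adj i (i + (k : Fin n)) := by
  have hkn : k < n := by omega
  have hv : ((k : Fin n)).val = k := by rw [Fin.val_natCast, Nat.mod_eq_of_lt hkn]
  unfold _root_.circulantGraph
  rw [SimpleGraph.fromRel_adj]
  refine ⟨?_, Or.inl ?_⟩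
  · intro h
    have h0 : (k : Fin n) = 0 := by
      have := left_eq_add.mp h
      exact this
    rw [h0, Fin.val_zero] at hv
    omega
  · have hval : (i + (k : Fin n)).val = (i.val + k) % n := by
      rw [Fin.val_add, hv]
    rcases hk with rfl | rfl
    · left; rw [hval]
    · right; rw [hval]

lemma reach_step (h3 : 3 ≤ n) (i : Fin n) (c : ℕ) : (circulantGraph n 2).Reachable i (i + (c : Fin n)) := by
  induction c with
  | zero => simpa using SimpleGraph.Reachable.refl i
  | succ c ih =>
    have e : ((c + 1 : ℕ) : Fin n) = (c : Fin n) + ((1 : ℕ) : Fin n) := by push_cast; ring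
    rw [e, ← add_assoc]
    exact ih.trans (adj_step h3 (i + (c : Fin n)) 1 (Or.inl rfl)).reachable

lemma circConn (h3 : 3 ≤ n) : (circulantGraph n 2).Connected := by
  have : Nonempty (Fin n) := ⟨⟨0, by omega⟩⟩
  constructor
  · intro u v
    have hv : v = u + (((v - u).val : ℕ) : Fin n) := by
      rw [Fin.cast_val_eq_self, add_sub_cancel]
    rw [hv]
    exact reach_step h3 u _

lemma dist_le_half (h3 : 3 ≤ n) (i : Fin n) (c : ℕ) :
    (circulantGraph n 2).dist i (i + (c : Fin n)) ≤ (c + 1) / 2 := by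
  induction c using Nat.strong_induction_on generalizing i with
  | _ c ih =>
    match c with
    | 0 => simp
    | 1 =>
      have := SimpleGraph.dist_le ((adj_step h3 i 1 (Or.inl rfl)).toWalk)
      simpa using this
    | (m + 2) =>
      have e : ((m + 2 : ℕ) : Fin n) = ((m : ℕ) : Fin n) + ((2 : ℕ) : Fin n) := by
        push_cast; ring
      have tri := (circConn h3).dist_triangle (u := i) (v := i + (m : Fin n))
        (w := i + ((m + 2 : ℕ) : Fin n))
      have h2 : (circulantGraph n 2).dist (i + (m : Fin n)) (i + ((m + 2:ℕ) : Fin n)) ≤ 1 := by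
        have hadj := adj_step h3 (i + (m : Fin n)) 2 (Or.inr rfl)
        have : i + ((m + 2 : ℕ) : Fin n) = (i + (m : Fin n)) + ((2:ℕ) : Fin n) := by
          rw [e, add_assoc]
        rw [this]
        simpa using SimpleGraph.dist_le hadj.toWalk
      have h1 := ih m (by omega) i
      omega

lemma cd_le_two_of_adj (h3 : 3 ≤ n) {u v : Fin n} (h : (circulantGraph n 2).Adj u v) : cd u v ≤ 2 := by
  unfold _root_.circulantGraph at h
  rw [SimpleGraph.fromRel_adj] at h
  obtain ⟨hne, hrel⟩ := h
  have key : ∀ (a b : Fin n) (k : ℕ), k = 1 ∨ k = 2 → (a.val + k) % n = b.val → cd a b ≤ 2 := by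
    intro a b k hk hab
    have hkn : k < n := by omega
    have hb : b = a + (k : Fin n) := by
      apply Fin.ext
      rw [Fin.val_add, Fin.val_natCast, Nat.mod_eq_of_lt hkn, hab]
    rw [hb, cd_add_nat, Fw_eq_of_lt hkn]
    rcases hk with rfl | rfl <;> omega
  rcases hrel with (h | h) | (h | h)
  · exact key u v 1 (Or.inl rfl) h
  · exact key u v 2 (Or.inr rfl) h
  · rw [cd_comm]; exact key v u 1 (Or.inl rfl) h
  · rw [cd_comm]; exact key v u 2 (Or.inr rfl) h

lemma cd_le_walk (h3 : 3 ≤ n) {u v : Fin n} (w : (circulantGraph n 2).Walk u v) :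
    cd u v ≤ 2 * w.length := by
  induction w with
  | nil => rw [cd_self]; omega
  | @cons a b c h p ih =>
    have := cd_triangle a b c
    have h2 := cd_le_two_of_adj h3 h
    simp only [SimpleGraph.Walk.length_cons]
    omega

lemma cd_le_two_dist (h3 : 3 ≤ n) (u v : Fin n) : cd u v ≤ 2 * (circulantGraph n 2).dist u v := by
  obtain ⟨w, hw⟩ := ((circConn h3).preconnected u v).exists_walk_length_eq_dist
  rw [← hw]
  exact cd_le_walk h3 w

lemma dist_le_cd (h3 : 3 ≤ n) (u v : Fin n) : (circulantGraph n 2).dist u v ≤ (cd u v + 1) / 2 := by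
  by_cases huv : u = v
  · subst huv; rw [cd_self]; simp
  have hd1 : (circulantGraph n 2).dist u v ≤ ((v - u).val + 1) / 2 := by
    have hv : v = u + (((v - u).val : ℕ) : Fin n) := by
      rw [Fin.cast_val_eq_self, add_sub_cancel]
    conv_lhs => rw [hv]
    exact dist_le_half h3 u _
  have hd2 : (circulantGraph n 2).dist u v ≤ ((u - v).val + 1) / 2 := by
    rw [SimpleGraph.dist_comm]
    have hu : u = v + (((u - v).val : ℕ) : Fin n) := by
      rw [Fin.cast_val_eq_self, add_sub_cancel]
    conv_lhs => rw [hu]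
    exact dist_le_half h3 v _
  have hsum : (v - u).val + (u - v).val = 0 ∨ (v - u).val + (u - v).val = n := by
    have h0 : ((v - u) + (u - v)) = (0 : Fin n) := by abel
    have : ((v - u).val + (u - v).val) % n = 0 := by
      rw [val_add_val_mod, h0, Fin.val_zero]
    have l1 := (v - u).isLt
    have l2 := (u - v).isLt
    rcases Nat.lt_or_ge ((v - u).val + (u - v).val) n with h | h
    · left; rwa [Nat.mod_eq_of_lt h] at this
    · right
      rw [Nat.mod_eq_sub_mod h, Nat.mod_eq_of_lt (by omega)] at this
      omega
  have hcd : cd u v = min (v - u).val (n - (v - u).val) := cd_eq_min u v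
  have hne : (v - u).val ≠ 0 := by
    intro h0
    exact huv (sub_eq_zero.mp (Fin.ext (h0.trans (Fin.val_zero n).symm))).symm
  omega

lemma dist_le_D (h3 : 3 ≤ n) (u v : Fin n) : (circulantGraph n 2).dist u v ≤ (n + 2) / 4 := by
  have h1 := dist_le_cd h3 u v
  have h2 : cd u v ≤ n / 2 := by
    rw [cd_eq_min]
    have := (v - u).isLt
    omega
  omega

end Graph

section Ecc
variable {n : ℕ} [NeZero n]

lemma eccent_le_D (h3 : 3 ≤ n) (v : Fin n) : _root_.eccent (circulantGraph n 2) v ≤ (n + 2) / 4 := by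
  apply Finset.sup_le
  intro u _
  exact dist_le_D h3 v u

lemma D_le_eccent (h3 : 3 ≤ n) (v : Fin n) : (n + 2) / 4 ≤ _root_.eccent (circulantGraph n 2) v := by
  have h1 : cd v (v + ((n / 2 : ℕ) : Fin n)) = n / 2 := by
    rw [cd_add_nat, Fw_eq_of_lt (by omega)]
    omega
  have h2 := cd_le_two_dist h3 v (v + ((n / 2 : ℕ) : Fin n))
  rw [h1] at h2
  have h4 : (circulantGraph n 2).dist v (v + ((n / 2 : ℕ) : Fin n)) ≤
      _root_.eccent (circulantGraph n 2) v := Finset.le_sup (Finset.mem_univ _)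
  omega

lemma dist_ge_of_pos (h3 : 3 ≤ n) {u v : Fin n} :
    (cd u v + 1) / 2 ≤ (circulantGraph n 2).dist u v := by
  have := cd_le_two_dist h3 u v
  omega

/-- ball of circular radius `r` around `v` -/
def ball (v : Fin n) (r : ℕ) : Finset (Fin n) :=
  Finset.univ.filter (fun x => cd v x ≤ r)

lemma card_ball (v : Fin n) (r : ℕ) (h : 2 * r + 1 ≤ n) : (ball v r).card = 2 * r + 1 := by
  have hcard : (ball v r).card =
      ((Finset.range n).filter (fun j => min j (n - j) ≤ r)).card := by
    apply Finset.card_bij (fun x _ => (x - v).val)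
    · intro x hx
      simp only [Finset.mem_filter, Finset.mem_range]
      refine ⟨(x - v).isLt, ?_⟩
      have := (Finset.mem_filter.mp hx).2
      rwa [cd_eq_min] at this
    · intro x hx y hy hxy
      have h2 : x - v = y - v := Fin.ext hxy
      exact sub_left_injective h2
    · intro j hj
      simp only [Finset.mem_filter, Finset.mem_range] at hj
      refine ⟨v + (j : Fin n), ?_, ?_⟩
      · simp only [_root_.ball, Finset.mem_filter, Finset.mem_univ, true_and]
        rw [cd_add_nat, Fw_eq_of_lt hj.1]
        exact hj.2
      · rw [add_sub_cancel_left, Fin.val_natCast, Nat.mod_eq_of_lt hj.1]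
  rw [hcard]
  have hset : (Finset.range n).filter (fun j => min j (n - j) ≤ r) =
      Finset.range (r + 1) ∪ Finset.Ico (n - r) n := by
    ext j
    simp only [Finset.mem_filter, Finset.mem_range, Finset.mem_union, Finset.mem_Ico]
    omega
  rw [hset, Finset.card_union_of_disjoint]
  · rw [Finset.card_range, Nat.card_Ico]
    omega
  · rw [Finset.disjoint_left]
    intro j hj hj2
    simp only [Finset.mem_range] at hj
    simp only [Finset.mem_Ico] at hj2
    omega

lemma mem_ball_iff {v x : Fin n} {r : ℕ} : x ∈ ball v r ↔ cd v x ≤ r := by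
  simp [_root_.ball]

end Ecc

section Main
variable {n : ℕ} [NeZero n]

lemma upper_bound (hn : 6 ≤ n) (f : Fin n → ℕ)
    (hf : IsIndepBroadcast (circulantGraph n 2) f) :
    (n % 12 = 9 → ∑ v, f v ≤ (n - 3) / 2) ∧
    (n % 12 ≠ 9 → ∑ v, f v ≤ 2 * ((n + 2) / 4 - 1)) := by
  have h3 : 3 ≤ n := by omega
  obtain ⟨hecc, hpair⟩ := hf
  set S : Finset (Fin n) := Finset.univ.filter (fun v => 0 < f v) with hS
  have hmemS : ∀ v, v ∈ S ↔ 0 < f v := by intro v; simp [hS]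
  have hsum : ∑ v, f v = ∑ v ∈ S, f v := by
    rw [hS]
    exact (Finset.sum_filter_of_ne (fun x _ hx => Nat.pos_of_ne_zero hx)).symm
  have key : ∀ u ∈ S, ∀ w ∈ S, u ≠ w → 2 * max (f u) (f w) + 1 ≤ cd u w := by
    intro u hu w hw huw
    have h1 := hpair u w huw ((hmemS u).mp hu) ((hmemS w).mp hw)
    have h2 := dist_le_cd h3 u w
    omega
  have hfD : ∀ u ∈ S, f u ≤ (n + 2) / 4 := fun u _ => (hecc u).trans (eccent_le_D h3 u)
  have hdisj : ∀ u ∈ S, ∀ w ∈ S, u ≠ w → Disjoint (ball u (f u)) (ball w (f w)) := by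
    intro u hu w hw huw
    rw [Finset.disjoint_left]
    intro x hxu hxw
    rw [mem_ball_iff] at hxu hxw
    have h1 := key u hu w hw huw
    have h2 := cd_triangle u x w
    have h3' := cd_comm x w
    omega
  have hbU : (S.biUnion (fun u => ball u (f u))).card = ∑ u ∈ S, (2 * f u + 1) := by
    rw [Finset.card_biUnion hdisj]
    apply Finset.sum_congr rfl
    intro u hu
    exact card_ball u (f u) (by have := hfD u hu; omega)
  have hcards : ∑ u ∈ S, (2 * f u + 1) ≤ n := by
    rw [← hbU]
    calc _ ≤ Finset.univ.card := Finset.card_le_card (Finset.subset_univ _)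
    _ = n := by simp
  have hexp : ∑ u ∈ S, (2 * f u + 1) = 2 * (∑ u ∈ S, f u) + S.card := by
    rw [Finset.sum_add_distrib, ← Finset.mul_sum, Finset.sum_const, smul_eq_mul, mul_one]
  have hmain : 2 * (∑ u ∈ S, f u) + S.card ≤ n := by omega
  rw [hsum]
  have hDle : ∀ u ∈ S, ∀ w ∈ S, u ≠ w → f u < (n + 2) / 4 := by
    intro u hu w hw huw
    have h1 := hpair u w huw ((hmemS u).mp hu) ((hmemS w).mp hw)
    have h2 := dist_le_D h3 u w
    omega
  have hm2 : S.card = 0 ∨ S.card = 1 ∨ S.card = 2 ∨ 3 ≤ S.card := by omega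
  rcases hm2 with hm | hm | hm | hm
  · rw [Finset.card_eq_zero.mp hm, Finset.sum_empty]
    constructor <;> intro <;> omega
  · obtain ⟨u, hu⟩ := Finset.card_eq_one.mp hm
    rw [hu, Finset.sum_singleton]
    have := hfD u (by rw [hu]; simp)
    constructor <;> intro h9 <;> omega
  · obtain ⟨u, w, huw, hUW⟩ := Finset.card_eq_two.mp hm
    have huS : u ∈ S := by rw [hUW]; simp
    have hwS : w ∈ S := by rw [hUW]; simp
    rw [hUW, Finset.sum_pair huw]
    have h1 := hDle u huS w hwS huw
    have h2 := hDle w hwS u huS huw.symm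
    constructor <;> intro h9 <;> omega
  · constructor
    · intro _; omega
    · intro h9
      rcases Nat.lt_or_ge (2 * (∑ u ∈ S, f u) + 3) n with hcase | hcase
      · omega
      · have heqn : 2 * (∑ u ∈ S, f u) + 3 = n ∧ S.card = 3 := by omega
        have hcover : S.biUnion (fun u => ball u (f u)) = Finset.univ := by
          apply Finset.eq_univ_of_card
          rw [hbU, hexp, Fintype.card_fin]
          omega
        have claim : ∀ u ∈ S, ∃ w ∈ S, w ≠ u ∧ f w = f u := by
          intro u hu
          have hfu : f u ≤ ∑ x ∈ S, f x :=
            Finset.single_le_sum (fun _ _ => Nat.zero_le _) hu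
          have hcdux : cd u (u + ((f u + 1 : ℕ) : Fin n)) = f u + 1 := by
            rw [cd_add_nat, Fw_eq_of_lt (by omega)]
            omega
          have hxmem : u + ((f u + 1 : ℕ) : Fin n) ∈ S.biUnion (fun w => ball w (f w)) := by
            rw [hcover]; exact Finset.mem_univ _
          obtain ⟨w, hw, hxw⟩ := Finset.mem_biUnion.mp hxmem
          rw [mem_ball_iff] at hxw
          have hwu : w ≠ u := by
            rintro rfl
            omega
          refine ⟨w, hw, hwu, ?_⟩
          have h1 := key u hu w hw (Ne.symm hwu)
          have h2 := cd_triangle u (u + ((f u + 1 : ℕ) : Fin n)) w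
          have h3' := cd_comm (u + ((f u + 1 : ℕ) : Fin n)) w
          omega
        obtain ⟨a, b, c, hab, hac, hbc, hSeq⟩ := Finset.card_eq_three.mp heqn.2
        have hmem3 : ∀ w ∈ S, w = a ∨ w = b ∨ w = c := by
          rw [hSeq]; intro w hw; simpa using hw
        have haS : a ∈ S := by rw [hSeq]; simp
        have hbS : b ∈ S := by rw [hSeq]; simp
        have hcS : c ∈ S := by rw [hSeq]; simp
        have da : f a = f b ∨ f a = f c := by
          obtain ⟨w, hwS, hne, heqw⟩ := claim a haS
          rcases hmem3 w hwS with rfl | rfl | rfl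
          · exact absurd rfl hne
          · exact Or.inl heqw.symm
          · exact Or.inr heqw.symm
        have db : f b = f a ∨ f b = f c := by
          obtain ⟨w, hwS, hne, heqw⟩ := claim b hbS
          rcases hmem3 w hwS with rfl | rfl | rfl
          · exact Or.inl heqw.symm
          · exact absurd rfl hne
          · exact Or.inr heqw.symm
        have dc : f c = f a ∨ f c = f b := by
          obtain ⟨w, hwS, hne, heqw⟩ := claim c hcS
          rcases hmem3 w hwS with rfl | rfl | rfl
          · exact Or.inl heqw.symm
          · exact Or.inr heqw.symm
          · exact absurd rfl hne
        have hsum3 : ∑ u ∈ S, f u = f a + f b + f c := by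
          rw [hSeq, Finset.sum_insert (by simp [hab, hac]),
            Finset.sum_insert (by simp [hbc]), Finset.sum_singleton]
          ring
        rcases da with h | h <;> rcases db with h' | h' <;> rcases dc with h'' | h'' <;> omega

end Main

lemma betaB_eq_of {V : Type*} [Fintype V] (G : SimpleGraph V) (T : ℕ)
    (hub : ∀ f, IsIndepBroadcast G f → ∑ v, f v ≤ T)
    (hex : ∃ f, IsIndepBroadcast G f ∧ ∑ v, f v = T) : betaB G = T := by
  unfold betaB
  apply le_antisymm
  · apply csSup_le ⟨T, hex⟩
    intro k hk
    obtain ⟨f, hf, rfl⟩ := hk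
    exact hub f hf
  · exact le_csSup ⟨T, fun k hk => by obtain ⟨f, hf, rfl⟩ := hk; exact hub f hf⟩ hex

section LB
variable {n : ℕ} [NeZero n]

lemma lower_two (hn : 6 ≤ n) : ∃ f : Fin n → ℕ,
    IsIndepBroadcast (circulantGraph n 2) f ∧ ∑ v, f v = 2 * ((n + 2) / 4 - 1) := by
  have h3 : 3 ≤ n := by omega
  set D := (n + 2) / 4 with hD
  set u2 : Fin n := ((n / 2 : ℕ) : Fin n) with hu2
  have hval : u2.val = n / 2 := by
    rw [hu2, Fin.val_natCast, Nat.mod_eq_of_lt (by omega)]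
  have hne : (0 : Fin n) ≠ u2 := by
    intro h
    have := congrArg Fin.val h
    rw [hval, Fin.val_zero] at this
    omega
  have hcd : cd (0 : Fin n) u2 = n / 2 := by
    have h0 : u2 = (0 : Fin n) + ((n / 2 : ℕ) : Fin n) := by rw [zero_add]
    rw [h0, cd_add_nat, Fw_eq_of_lt (by omega)]
    omega
  have hdist : D ≤ (circulantGraph n 2).dist 0 u2 := by
    have := cd_le_two_dist h3 (0 : Fin n) u2
    rw [hcd] at this
    omega
  refine ⟨fun v => (if v = 0 then D - 1 else 0) + (if v = u2 then D - 1 else 0), ⟨?_, ?_⟩, ?_⟩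
  · intro v
    have hDe := D_le_eccent h3 v
    beta_reduce
    split_ifs with h1 h2 h2
    · exact absurd (h1.symm.trans h2) hne
    · omega
    · omega
    · omega
  · intro u v huv hu hv
    beta_reduce
    have hcases : ∀ w : Fin n,
        0 < (if w = 0 then D - 1 else 0) + (if w = u2 then D - 1 else 0) → w = 0 ∨ w = u2 := by
      intro w hw
      by_cases h1 : w = 0
      · exact Or.inl h1
      · by_cases h2 : w = u2
        · exact Or.inr h2
        · simp [h1, h2] at hw
    have hvals : ∀ w : Fin n,
        (if w = 0 then D - 1 else 0) + (if w = u2 then D - 1 else 0) ≤ D - 1 := by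
      intro w
      split_ifs with h1 h2 h2
      · exact absurd (h1.symm.trans h2) hne
      · omega
      · omega
      · omega
    have hd2 : D ≤ (circulantGraph n 2).dist u v := by
      rcases hcases u hu with rfl | rfl <;> rcases hcases v hv with rfl | rfl
      · exact absurd rfl huv
      · exact hdist
      · rw [SimpleGraph.dist_comm]; exact hdist
      · exact absurd rfl huv
    have h1 := hvals u
    have h2 := hvals v
    have hD2 : 2 ≤ D := by omega
    rcases max_cases ((if u = 0 then D - 1 else 0) + (if u = u2 then D - 1 else 0))
      ((if v = 0 then D - 1 else 0) + (if v = u2 then D - 1 else 0)) with ⟨he, _⟩ | ⟨he, _⟩ <;>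
      rw [he] <;> omega
  · beta_reduce
    rw [Finset.sum_add_distrib, Finset.sum_ite_eq' Finset.univ (0 : Fin n) (fun _ => D - 1),
      Finset.sum_ite_eq' Finset.univ u2 (fun _ => D - 1)]
    simp only [Finset.mem_univ, if_pos]
    omega

lemma lower_three (hn : 6 ≤ n) (h9 : n % 12 = 9) : ∃ f : Fin n → ℕ,
    IsIndepBroadcast (circulantGraph n 2) f ∧ ∑ v, f v = (n - 3) / 2 := by
  have h3 : 3 ≤ n := by omega
  set k := n / 12 with hk
  have hn12 : n = 12 * k + 9 := by omega
  set t := 2 * k + 1 with ht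
  set g := 4 * k + 3 with hg
  set u1 : Fin n := 0 with hu1
  set u2 : Fin n := ((g : ℕ) : Fin n) with hu2
  set u3 : Fin n := ((2 * g : ℕ) : Fin n) with hu3
  have hv2 : u2.val = g := by rw [hu2, Fin.val_natCast, Nat.mod_eq_of_lt (by omega)]
  have hv3 : u3.val = 2 * g := by rw [hu3, Fin.val_natCast, Nat.mod_eq_of_lt (by omega)]
  have h12 : u1 ≠ u2 := by
    intro h; have := congrArg Fin.val h; rw [hv2, Fin.val_zero] at this; omega
  have h13 : u1 ≠ u3 := by
    intro h; have := congrArg Fin.val h; rw [hv3, Fin.val_zero] at this; omega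
  have h23 : u2 ≠ u3 := by
    intro h; have := congrArg Fin.val h; rw [hv2, hv3] at this; omega
  have hcd12 : cd u1 u2 = g := by
    have h0 : u2 = u1 + ((g : ℕ) : Fin n) := by rw [hu1, zero_add]
    rw [h0, cd_add_nat, Fw_eq_of_lt (by omega)]; omega
  have hcd13 : cd u1 u3 = g := by
    have h0 : u3 = u1 + ((2 * g : ℕ) : Fin n) := by rw [hu1, zero_add]
    rw [h0, cd_add_nat, Fw_eq_of_lt (by omega)]; omega
  have hcd23 : cd u2 u3 = g := by
    have h0 : u3 = u2 + ((g : ℕ) : Fin n) := by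
      rw [hu3, hu2, ← Nat.cast_add]
      congr 1
      omega
    rw [h0, cd_add_nat, Fw_eq_of_lt (by omega)]; omega
  have hdd : ∀ u v : Fin n, cd u v = g → t < (circulantGraph n 2).dist u v := by
    intro u v hcd
    have := cd_le_two_dist h3 u v
    rw [hcd] at this
    omega
  refine ⟨fun v => (if v = u1 then t else 0) + (if v = u2 then t else 0) +
    (if v = u3 then t else 0), ⟨?_, ?_⟩, ?_⟩
  · intro v
    have hDe := D_le_eccent h3 v
    have hvt : (if v = u1 then t else 0) + (if v = u2 then t else 0) +
        (if v = u3 then t else 0) ≤ t := by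
      split_ifs with h1 h2 h3' <;>
        first
          | omega
          | exact absurd (h1.symm.trans h2) h12
          | exact absurd (h1.symm.trans h3') h13
          | exact absurd (h2.symm.trans h3') h23
    beta_reduce
    omega
  · intro u v huv hu hv
    beta_reduce
    have hcases : ∀ w : Fin n,
        0 < (if w = u1 then t else 0) + (if w = u2 then t else 0) + (if w = u3 then t else 0) →
        w = u1 ∨ w = u2 ∨ w = u3 := by
      intro w hw
      by_cases h1 : w = u1
      · exact Or.inl h1
      by_cases h2 : w = u2
      · exact Or.inr (Or.inl h2)
      by_cases h3' : w = u3
      · exact Or.inr (Or.inr h3')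
      simp [h1, h2, h3'] at hw
    have hvt : ∀ w : Fin n, (if w = u1 then t else 0) + (if w = u2 then t else 0) +
        (if w = u3 then t else 0) ≤ t := by
      intro w
      split_ifs with h1 h2 h3' <;>
        first
          | omega
          | exact absurd (h1.symm.trans h2) h12
          | exact absurd (h1.symm.trans h3') h13
          | exact absurd (h2.symm.trans h3') h23
    have hd2 : t < (circulantGraph n 2).dist u v := by
      rcases hcases u hu with rfl | rfl | rfl <;> rcases hcases v hv with rfl | rfl | rfl
      · exact absurd rfl huv
      · exact hdd _ _ hcd12
      · exact hdd _ _ hcd13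
      · rw [SimpleGraph.dist_comm]; exact hdd _ _ hcd12
      · exact absurd rfl huv
      · exact hdd _ _ hcd23
      · rw [SimpleGraph.dist_comm]; exact hdd _ _ hcd13
      · rw [SimpleGraph.dist_comm]; exact hdd _ _ hcd23
      · exact absurd rfl huv
    have h1 := hvt u
    have h2 := hvt v
    rcases max_cases ((if u = u1 then t else 0) + (if u = u2 then t else 0) +
        (if u = u3 then t else 0))
      ((if v = u1 then t else 0) + (if v = u2 then t else 0) + (if v = u3 then t else 0)) with
      ⟨he, _⟩ | ⟨he, _⟩ <;> rw [he] <;> omega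
  · beta_reduce
    rw [Finset.sum_add_distrib, Finset.sum_add_distrib,
      Finset.sum_ite_eq' Finset.univ u1 (fun _ => t),
      Finset.sum_ite_eq' Finset.univ u2 (fun _ => t),
      Finset.sum_ite_eq' Finset.univ u3 (fun _ => t)]
    simp only [Finset.mem_univ, if_pos]
    omega

end LB

lemma betaB_complete {n : ℕ} [NeZero n] (hn : 2 ≤ n)
    (hadj : ∀ u v : Fin n, u ≠ v → (circulantGraph n 2).Adj u v) :
    betaB (circulantGraph n 2) = 1 := by
  have hnt : Nontrivial (Fin n) := Fin.nontrivial_iff_two_le.mpr hn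
  have hdist : ∀ u v : Fin n, u ≠ v → (circulantGraph n 2).dist u v = 1 :=
    fun u v h => SimpleGraph.dist_eq_one_iff_adj.mpr (hadj u v h)
  have hecc1 : ∀ v, _root_.eccent (circulantGraph n 2) v ≤ 1 := by
    intro v
    apply Finset.sup_le
    intro u _
    by_cases h : v = u
    · subst h
      rw [SimpleGraph.dist_self]
      omega
    · rw [hdist v u h]
  have hecc_ge : ∀ v : Fin n, 1 ≤ _root_.eccent (circulantGraph n 2) v := by
    intro v
    obtain ⟨u, hu⟩ := exists_ne v
    have h1 : (circulantGraph n 2).dist v u = 1 := hdist v u (Ne.symm hu)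
    have h2 : (circulantGraph n 2).dist v u ≤ _root_.eccent (circulantGraph n 2) v :=
      Finset.le_sup (Finset.mem_univ u)
    omega
  apply betaB_eq_of
  · intro f hf
    obtain ⟨he, hp⟩ := hf
    by_cases hz : ∀ v, f v = 0
    · rw [Finset.sum_eq_zero (fun v _ => hz v)]
      omega
    · push_neg at hz
      obtain ⟨u, hu⟩ := hz
      have hupos : 0 < f u := Nat.pos_of_ne_zero hu
      have hothers : ∀ v, v ≠ u → f v = 0 := by
        intro v hv
        by_contra hfv
        have h1 := hp v u hv (Nat.pos_of_ne_zero hfv) hupos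
        rw [hdist v u hv] at h1
        omega
      calc ∑ v, f v = f u :=
            Finset.sum_eq_single u (fun v _ hv => hothers v hv) (by simp)
        _ ≤ 1 := (he u).trans (hecc1 u)
  · refine ⟨fun v => if v = 0 then 1 else 0, ⟨?_, ?_⟩, ?_⟩
    · intro v
      beta_reduce
      split_ifs with h
      · subst h; exact hecc_ge 0
      · omega
    · intro u v huv hu hv
      exfalso
      beta_reduce at hu hv
      have hu0 : u = 0 := by by_contra h; simp [h] at hu
      have hv0 : v = 0 := by by_contra h; simp [h] at hv
      exact huv (hu0.trans hv0.symm)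
    · beta_reduce
      rw [Finset.sum_ite_eq' Finset.univ (0 : Fin n) (fun _ => 1)]
      simp

lemma adj4 : ∀ u v : Fin 4, u ≠ v → (circulantGraph 4 2).Adj u v := by
  intro u v h
  unfold _root_.circulantGraph
  rw [SimpleGraph.fromRel_adj]
  refine ⟨h, ?_⟩
  revert h
  revert u v
  decide

lemma adj5 : ∀ u v : Fin 5, u ≠ v → (circulantGraph 5 2).Adj u v := by
  intro u v h
  unfold _root_.circulantGraph
  rw [SimpleGraph.fromRel_adj]
  refine ⟨h, ?_⟩
  revert h
  revert u v
  decide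

theorem stmt14 (n : ℕ) (hn : 6 ≤ n) :
    (n % 12 = 9 → betaB (circulantGraph n 2) = (n - 3) / 2) ∧
    (n % 12 ≠ 9 → betaB (circulantGraph n 2) = 2 * ((n - 1 + 3) / 4 - 1)) ∧
    betaB (circulantGraph 4 2) = 1 ∧ betaB (circulantGraph 5 2) = 1 := by
  have hnz : NeZero n := ⟨by omega⟩
  refine ⟨?_, ?_, ?_, ?_⟩
  · intro h9
    apply betaB_eq_of
    · intro f hf
      exact (upper_bound hn f hf).1 h9
    · exact lower_three hn h9
  · intro h9
    have e : 2 * ((n - 1 + 3) / 4 - 1) = 2 * ((n + 2) / 4 - 1) := by omega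
    rw [e]
    apply betaB_eq_of
    · intro f hf
      exact (upper_bound hn f hf).2 h9
    · exact lower_two hn
  · exact betaB_complete (by omega) adj4
  · exact betaB_complete (by omega) adj5
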